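/- There exists n₀ such that for all n ≥ n₀, setting d = log n / 300, for every natural number k ≤ n^{1/2} and every real p with log n/(4n) ≤ p ≤ 2 log n/n, we have ∑_{i=0}^{d} C(n,i) p^i (1-p)^{n-k} ≤ exp(-pn + (log n)/30). -/

import Mathlib

set_option maxHeartbeats 1000000


/-- There exists `n₀` such that for all `n ≥ n₀`, with `d = log n / 300`,
for every `k ≤ n^{1/2}` and every real `p` with `log n/(4n) ≤ p ≤ 2 log n/n`,
`∑_{i=0}^{⌊d⌋} C(n,i) p^i (1-p)^{n-k} ≤ exp(-pn + (log n)/30)`. -/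
theorem stmt0 :
    ∃ n₀ : ℕ, ∀ n : ℕ, n₀ ≤ n →
      ∀ k : ℕ, (k : ℝ) ≤ (n : ℝ) ^ (1 / 2 : ℝ) →
      ∀ p : ℝ, Real.log n / (4 * n) ≤ p → p ≤ 2 * Real.log n / n →
      ∑ i ∈ Finset.range (⌊Real.log n / 300⌋₊ + 1),
          (n.choose i : ℝ) * p ^ i * (1 - p) ^ (n - k)
        ≤ Real.exp (-(p * n) + Real.log n / 30) := by
  use 4000000
  intro n hn k hk p hp1 hp2
  have hn0 : (4000000 : ℝ) ≤ (n : ℝ) := by exact_mod_cast hn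
  have hnpos : (0 : ℝ) < n := by linarith
  set L := Real.log n with hLdef
  have hL1 : (1 : ℝ) ≤ L := by
    rw [hLdef, show (1:ℝ) = Real.log (Real.exp 1) by rw [Real.log_exp]]
    exact Real.log_le_log (Real.exp_pos 1) (by
      have := Real.exp_one_lt_d9
      linarith)
  have hL0 : (0 : ℝ) < L := by linarith
  -- sqrt facts
  have hsq : Real.sqrt n * Real.sqrt n = n := Real.mul_self_sqrt hnpos.le
  have hsqrt2000 : (2000 : ℝ) ≤ Real.sqrt n := by
    have : Real.sqrt 4000000 ≤ Real.sqrt n := Real.sqrt_le_sqrt hn0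
    have h2 : Real.sqrt 4000000 = 2000 := by
      rw [show (4000000:ℝ) = 2000^2 by norm_num, Real.sqrt_sq (by norm_num)]
    linarith
  have hsqrtpos : (0:ℝ) < Real.sqrt n := by linarith
  -- L ≤ 2 * sqrt n
  have hL2sqrt : L ≤ 2 * Real.sqrt n := by
    have h := Real.log_le_sub_one_of_pos hsqrtpos
    have h2 : Real.log (Real.sqrt n) = L / 2 := by
      rw [Real.log_sqrt hnpos.le]
    linarith
  have hp0 : 0 ≤ p := le_trans (by positivity) hp1
  have hnp : (n : ℝ) * p ≤ 2 * L := by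
    have := (le_div_iff₀ hnpos).mp hp2
    linarith
  have hp_le_one : p ≤ 1 := by
    have : 2 * L / n ≤ 1 := by
      rw [div_le_one hnpos]
      nlinarith [hsqrt2000, hsq]
    linarith
  -- pk bound
  have hk0 : (0:ℝ) ≤ k := Nat.cast_nonneg k
  have hksqrt : (k : ℝ) ≤ Real.sqrt n := by
    rwa [Real.sqrt_eq_rpow]
  have hpk : p * k ≤ L / 1000 := by
    have h1 : p * k ≤ (2 * L / n) * Real.sqrt n :=
      mul_le_mul hp2 hksqrt hk0 (by positivity)
    have h2 : (2 * L / n) * Real.sqrt n = 2 * L / Real.sqrt n := by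
      field_simp
      rw [sq, hsq]
    have h3 : 2 * L / Real.sqrt n ≤ 2 * L / 2000 :=
      div_le_div_of_nonneg_left (by linarith) (by norm_num) hsqrt2000
    linarith
  set D := ⌊L / 300⌋₊ with hDdef
  have hDL : (D : ℝ) ≤ L / 300 := Nat.floor_le (by positivity)
  have hD0 : (0:ℝ) ≤ D := Nat.cast_nonneg D
  -- bound (1-p)^(n-k)
  have hq : (1 - p) ^ (n - k) ≤ Real.exp (-(p * n) + p * k) := by
    have h1 : (1 - p) ^ (n - k) ≤ Real.exp (-p) ^ (n - k) :=
      pow_le_pow_left₀ (by linarith) (by linarith [Real.add_one_le_exp (-p)]) _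
    have h2 : Real.exp (-p) ^ (n - k) = Real.exp (-(p * ((n - k : ℕ) : ℝ))) := by
      rw [← Real.exp_nat_mul]; ring_nf
    have h3 : (n : ℝ) - k ≤ ((n - k : ℕ) : ℝ) := by
      rcases le_or_gt k n with h | h
      · rw [Nat.cast_sub h]
      · have : n - k = 0 := Nat.sub_eq_zero_of_le h.le
        rw [this]; push_cast
        have : (n:ℝ) ≤ k := by exact_mod_cast h.le
        linarith
    have h4 : -(p * ((n - k : ℕ) : ℝ)) ≤ -(p * n) + p * k := by nlinarith
    calc (1 - p) ^ (n - k) ≤ Real.exp (-(p * ((n - k : ℕ) : ℝ))) := h2 ▸ h1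
      _ ≤ Real.exp (-(p * n) + p * k) := Real.exp_le_exp.mpr h4
  -- bound the binomial sum
  have hsum : ∑ i ∈ Finset.range (D + 1), (n.choose i : ℝ) * p ^ i
      ≤ (256 : ℝ) ^ D * Real.exp ((n * p) / 256) := by
    have hterm : ∀ i ∈ Finset.range (D + 1),
        (n.choose i : ℝ) * p ^ i ≤ (256 : ℝ) ^ D * ((n * p / 256) ^ i / (Nat.factorial i)) := by
      intro i hi
      have hiD : i ≤ D := Nat.lt_succ_iff.mp (Finset.mem_range.mp hi)
      have h1 : (n.choose i : ℝ) * p ^ i ≤ ((n : ℝ) ^ i / (Nat.factorial i)) * p ^ i := by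
        apply mul_le_mul_of_nonneg_right _ (pow_nonneg hp0 i)
        exact_mod_cast Nat.choose_le_pow_div i n
      have h2 : ((n : ℝ) ^ i / (Nat.factorial i)) * p ^ i
          = (256 : ℝ) ^ i * ((n * p / 256) ^ i / (Nat.factorial i)) := by
        rw [div_pow, mul_pow]
        field_simp
      have h3 : (256 : ℝ) ^ i ≤ (256 : ℝ) ^ D := pow_le_pow_right₀ (by norm_num) hiD
      have h4 : (0:ℝ) ≤ (n * p / 256) ^ i / (Nat.factorial i) := by positivity
      calc (n.choose i : ℝ) * p ^ i ≤ (256 : ℝ) ^ i * ((n * p / 256) ^ i / (Nat.factorial i)) :=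
            h2 ▸ h1
        _ ≤ (256 : ℝ) ^ D * ((n * p / 256) ^ i / (Nat.factorial i)) :=
            mul_le_mul_of_nonneg_right h3 h4
    calc ∑ i ∈ Finset.range (D + 1), (n.choose i : ℝ) * p ^ i
        ≤ ∑ i ∈ Finset.range (D + 1), (256 : ℝ) ^ D * ((n * p / 256) ^ i / (Nat.factorial i)) :=
          Finset.sum_le_sum hterm
      _ = (256 : ℝ) ^ D * ∑ i ∈ Finset.range (D + 1), ((n * p / 256) ^ i / (Nat.factorial i)) := by
          rw [Finset.mul_sum]
      _ ≤ (256 : ℝ) ^ D * Real.exp ((n * p) / 256) := by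
          apply mul_le_mul_of_nonneg_left _ (by positivity)
          exact Real.sum_le_exp_of_nonneg (by positivity) (D + 1)
  -- combine
  have hfactor : ∑ i ∈ Finset.range (D + 1), (n.choose i : ℝ) * p ^ i * (1 - p) ^ (n - k)
      = (∑ i ∈ Finset.range (D + 1), (n.choose i : ℝ) * p ^ i) * (1 - p) ^ (n - k) := by
    rw [Finset.sum_mul]
  rw [hfactor]
  have hqpos : (0:ℝ) ≤ (1 - p) ^ (n - k) := pow_nonneg (by linarith) _
  have hsumpos : (0:ℝ) ≤ ∑ i ∈ Finset.range (D + 1), (n.choose i : ℝ) * p ^ i := by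
    apply Finset.sum_nonneg; intro i _; positivity
  have hmain : (∑ i ∈ Finset.range (D + 1), (n.choose i : ℝ) * p ^ i) * (1 - p) ^ (n - k)
      ≤ ((256 : ℝ) ^ D * Real.exp ((n * p) / 256)) * Real.exp (-(p * n) + p * k) :=
    mul_le_mul hsum hq hqpos (by positivity)
  apply hmain.trans
  -- rewrite as single exponential
  have h256 : (256 : ℝ) ^ D = Real.exp (D * Real.log 256) := by
    rw [Real.exp_nat_mul, Real.exp_log (by norm_num)]
  rw [h256, ← Real.exp_add, ← Real.exp_add, Real.exp_le_exp]
  -- final arithmetic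
  have hlog256 : Real.log 256 ≤ 5.5452 := by
    have h2 : Real.log 256 = 8 * Real.log 2 := by
      rw [show (256:ℝ) = 2 ^ (8:ℕ) by norm_num, Real.log_pow]; norm_num
    have := Real.log_two_lt_d9
    rw [h2]; linarith
  have hlog256' : (0:ℝ) ≤ Real.log 256 := Real.log_nonneg (by norm_num)
  have hDlog : (D : ℝ) * Real.log 256 ≤ (L / 300) * 5.5452 := by
    apply mul_le_mul hDL hlog256 hlog256' (by positivity)
  linarith [hnp, hpk, hDlog, hL0]
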